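/- Let k ≥ 1 and γ_1, …, γ_k ∈ ℝ, and define f : ℝ → ℝ by f(ω) = (1/k)·∑_{j=1}^k cos(ω·γ_j). Then for every α > 0, sup_{ω ∈ [α, 100α]} f(ω) ≥ −1/5. -/
import Mathlib

lemma fejer5 (x : ℝ) : -(1/5 : ℝ) ≤ (1/3) * Real.cos x + (4/15) * Real.cos (2*x)
    + (1/5) * Real.cos (3*x) + (2/15) * Real.cos (4*x) + (1/15) * Real.cos (5*x) := by
  have h2 : Real.cos (2*x) = 2 * Real.cos x ^ 2 - 1 := Real.cos_two_mul x
  have h3 : Real.cos (3*x) = 4 * Real.cos x ^ 3 - 3 * Real.cos x := Real.cos_three_mul x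
  have h4 : Real.cos (4*x) = 2 * Real.cos (2*x) ^ 2 - 1 := by
    rw [show (4:ℝ)*x = 2*(2*x) by ring]; exact Real.cos_two_mul (2*x)
  have h5 : Real.cos (5*x) = Real.cos (2*x) * Real.cos (3*x) - Real.sin (2*x) * Real.sin (3*x) := by
    rw [show (5:ℝ)*x = 2*x + 3*x by ring]; exact Real.cos_add _ _
  have hs2 : Real.sin (2*x) = 2 * Real.sin x * Real.cos x := Real.sin_two_mul x
  have hs3 : Real.sin (3*x) = 3 * Real.sin x - 4 * Real.sin x ^ 3 := Real.sin_three_mul x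
  have hpyt : Real.sin x ^ 2 = 1 - Real.cos x ^ 2 := by
    have := Real.sin_sq_add_cos_sq x; linarith
  have hc : -1 ≤ Real.cos x := Real.neg_one_le_cos x
  have hsin : 2*Real.sin x*Real.cos x*(3*Real.sin x - 4*Real.sin x^3)
      = 6*(1-Real.cos x^2)*Real.cos x - 8*(1-Real.cos x^2)^2*Real.cos x := by
    linear_combination (6*Real.cos x - 8*Real.cos x*(Real.sin x^2 + 1 - Real.cos x^2)) * hpyt
  rw [h5, hs2, hs3, h4, h2, h3, hsin]
  nlinarith [mul_nonneg (by linarith : (0:ℝ) ≤ Real.cos x + 1)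
    (sq_nonneg (4*Real.cos x^2 - 1)), hpyt, sq_nonneg (Real.sin x)]

theorem statement10 (k : ℕ) (hk : 1 ≤ k) (γ : Fin k → ℝ) (α : ℝ) (hα : 0 < α) :
    -(1 / 5 : ℝ) ≤ ⨆ ω : Set.Icc α (100 * α), (k : ℝ)⁻¹ * ∑ j, Real.cos ((ω : ℝ) * γ j) := by
  have hk0 : (0:ℝ) < (k:ℝ) := by exact_mod_cast hk
  set F : ℝ → ℝ := fun ω => (k : ℝ)⁻¹ * ∑ j, Real.cos (ω * γ j) with hF
  have hbdd : BddAbove (Set.range fun ω : Set.Icc α (100 * α) => F ω) := by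
    refine ⟨1, ?_⟩
    rintro y ⟨ω, rfl⟩
    have h1 : ∑ j, Real.cos ((ω : ℝ) * γ j) ≤ (k : ℝ) := by
      calc ∑ j, Real.cos ((ω : ℝ) * γ j) ≤ ∑ _j : Fin k, (1:ℝ) :=
            Finset.sum_le_sum fun j _ => Real.cos_le_one _
        _ = (k : ℝ) := by simp
    have := mul_le_mul_of_nonneg_left h1 (inv_nonneg.mpr hk0.le)
    simpa [hF, inv_mul_cancel₀ hk0.ne'] using this
  have hmem : ∀ j : ℕ, 1 ≤ j → j ≤ 100 → (j : ℝ) * α ∈ Set.Icc α (100 * α) := by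
    intro j h1 h2
    have h1' : (1:ℝ) ≤ (j:ℝ) := by exact_mod_cast h1
    have h2' : (j:ℝ) ≤ 100 := by exact_mod_cast h2
    constructor
    · nlinarith
    · nlinarith
  have hle : ∀ j : ℕ, 1 ≤ j → j ≤ 100 →
      F ((j : ℝ) * α) ≤ ⨆ ω : Set.Icc α (100 * α), F ω := by
    intro j h1 h2
    exact le_ciSup hbdd (⟨(j : ℝ) * α, hmem j h1 h2⟩ : Set.Icc α (100 * α))
  have e1 := hle 1 (by norm_num) (by norm_num)
  have e2 := hle 2 (by norm_num) (by norm_num)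
  have e3 := hle 3 (by norm_num) (by norm_num)
  have e4 := hle 4 (by norm_num) (by norm_num)
  have e5 := hle 5 (by norm_num) (by norm_num)
  have hcomb : -(1/5 : ℝ) ≤ (1/3) * F (1 * α) + (4/15) * F (2 * α)
      + (1/5) * F (3 * α) + (2/15) * F (4 * α) + (1/15) * F (5 * α) := by
    have hG : ∀ i : Fin k, -(1/5 : ℝ) ≤ (1/3) * Real.cos ((1*α) * γ i)
        + (4/15) * Real.cos ((2*α) * γ i) + (1/5) * Real.cos ((3*α) * γ i)
        + (2/15) * Real.cos ((4*α) * γ i) + (1/15) * Real.cos ((5*α) * γ i) := by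
      intro i
      have := fejer5 (α * γ i)
      have r1 : (1*α) * γ i = α * γ i := by ring
      have r2 : (2*α) * γ i = 2 * (α * γ i) := by ring
      have r3 : (3*α) * γ i = 3 * (α * γ i) := by ring
      have r4 : (4*α) * γ i = 4 * (α * γ i) := by ring
      have r5 : (5*α) * γ i = 5 * (α * γ i) := by ring
      rw [r1, r2, r3, r4, r5]
      linarith
    have hsum : -(1/5 : ℝ) * (k : ℝ) ≤ ∑ i : Fin k, ((1/3) * Real.cos ((1*α) * γ i)
        + (4/15) * Real.cos ((2*α) * γ i) + (1/5) * Real.cos ((3*α) * γ i)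
        + (2/15) * Real.cos ((4*α) * γ i) + (1/15) * Real.cos ((5*α) * γ i)) := by
      calc -(1/5 : ℝ) * (k : ℝ) = ∑ _i : Fin k, -(1/5 : ℝ) := by
            simp [mul_comm]
        _ ≤ _ := Finset.sum_le_sum fun i _ => hG i
    have hexp : (1/3) * F (1 * α) + (4/15) * F (2 * α)
        + (1/5) * F (3 * α) + (2/15) * F (4 * α) + (1/15) * F (5 * α)
        = (k : ℝ)⁻¹ * ∑ i : Fin k, ((1/3) * Real.cos ((1*α) * γ i)
        + (4/15) * Real.cos ((2*α) * γ i) + (1/5) * Real.cos ((3*α) * γ i)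
        + (2/15) * Real.cos ((4*α) * γ i) + (1/15) * Real.cos ((5*α) * γ i)) := by
      simp only [hF, Finset.sum_add_distrib, Finset.mul_sum]
      rw [← Finset.sum_add_distrib, ← Finset.sum_add_distrib, ← Finset.sum_add_distrib,
        ← Finset.sum_add_distrib, ← Finset.sum_add_distrib, ← Finset.sum_add_distrib,
        ← Finset.sum_add_distrib, ← Finset.sum_add_distrib]
      rw [Finset.mul_sum]
      exact Finset.sum_congr rfl fun i _ => by ring
    rw [hexp]
    calc -(1/5 : ℝ) = (k : ℝ)⁻¹ * (-(1/5) * (k : ℝ)) := by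
          field_simp
      _ ≤ _ := mul_le_mul_of_nonneg_left hsum (inv_nonneg.mpr hk0.le)
  have hrw : ∀ j : ℕ, ((j : ℝ) * α) = ((j : ℝ) * α) := fun _ => rfl
  have e1' : F (1 * α) ≤ ⨆ ω : Set.Icc α (100 * α), F ω := by
    simpa using e1
  have e2' : F (2 * α) ≤ ⨆ ω : Set.Icc α (100 * α), F ω := by
    simpa using e2
  have e3' : F (3 * α) ≤ ⨆ ω : Set.Icc α (100 * α), F ω := by
    simpa using e3
  have e4' : F (4 * α) ≤ ⨆ ω : Set.Icc α (100 * α), F ω := by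
    simpa using e4
  have e5' : F (5 * α) ≤ ⨆ ω : Set.Icc α (100 * α), F ω := by
    simpa using e5
  linarith
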